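/- For every real c > 0 and real α, the limit as n → ∞ of −n · sin(π + √(cn) + √(c(n−1)) − √(c(n−2)) − √(c(n−3))) · sin(√(cn) − √(c(n−1)) + √(c(n−2)) − √(c(n−3))) equals 2c. -/

import Mathlib

open Real Filter

private lemma sin_div_lim : Tendsto (fun x : ℝ => Real.sin x / x) (nhdsWithin 0 {0}ᶜ) (nhds 1) := by
  have h := Real.hasDerivAt_sin 0
  rw [Real.cos_zero] at h
  have h2 := hasDerivAt_iff_tendsto_slope.mp h
  refine h2.congr fun x => ?_
  simp [slope_def_field]

private lemma sqrt_deriv (k : ℝ) : HasDerivAt (fun t : ℝ => Real.sqrt (1 - k * t)) (-(k/2)) 0 := by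
  have h1 : HasDerivAt (fun t : ℝ => 1 - k * t) (-k) 0 := by
    simpa using ((hasDerivAt_id (0:ℝ)).const_mul k).const_sub 1
  have h2 : HasDerivAt Real.sqrt (1 / (2 * Real.sqrt (1 - k * 0))) (1 - k * 0) :=
    Real.hasDerivAt_sqrt (by norm_num)
  have h3 := h2.comp 0 h1
  refine h3.congr_deriv ?_
  norm_num [Real.sqrt_one]
  ring

private lemma limA : Tendsto (fun t : ℝ =>
    (1 + Real.sqrt (1 - 1 * t) - Real.sqrt (1 - 2 * t) - Real.sqrt (1 - 3 * t)) / t)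
    (nhdsWithin 0 {0}ᶜ) (nhds 2) := by
  have hg : HasDerivAt (fun t : ℝ =>
      1 + Real.sqrt (1 - 1 * t) - Real.sqrt (1 - 2 * t) - Real.sqrt (1 - 3 * t)) 2 0 := by
    have := (((sqrt_deriv 1).const_add 1).sub (sqrt_deriv 2)).sub (sqrt_deriv 3)
    refine this.congr_deriv ?_
    norm_num
  have h2 := hasDerivAt_iff_tendsto_slope.mp hg
  refine h2.congr fun x => ?_
  simp [slope_def_field, Real.sqrt_one]

private lemma limB : Tendsto (fun t : ℝ =>
    (1 - Real.sqrt (1 - 1 * t) + Real.sqrt (1 - 2 * t) - Real.sqrt (1 - 3 * t)) / t)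
    (nhdsWithin 0 {0}ᶜ) (nhds 1) := by
  have hg : HasDerivAt (fun t : ℝ =>
      1 - Real.sqrt (1 - 1 * t) + Real.sqrt (1 - 2 * t) - Real.sqrt (1 - 3 * t)) 1 0 := by
    have := (((sqrt_deriv 1).const_sub 1).add (sqrt_deriv 2)).sub (sqrt_deriv 3)
    refine this.congr_deriv ?_
    norm_num
  have h2 := hasDerivAt_iff_tendsto_slope.mp hg
  refine h2.congr fun x => ?_
  simp [slope_def_field, Real.sqrt_one]

private lemma sqrt_fact {c : ℝ} (hc : 0 ≤ c) {t : ℝ} (ht : 0 < t) (k : ℝ) :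
    Real.sqrt (c * (t - k)) = Real.sqrt c * Real.sqrt t * Real.sqrt (1 - k * (1/t)) := by
  have h : c * (t - k) = c * t * (1 - k * (1/t)) := by field_simp
  rw [h, Real.sqrt_mul (mul_nonneg hc ht.le), Real.sqrt_mul hc]

private lemma key (c t : ℝ) (hc : 0 < c) (ht : 3 ≤ t) :
    0 < 1 + Real.sqrt (1 - 1 * (1/t)) - Real.sqrt (1 - 2 * (1/t)) - Real.sqrt (1 - 3 * (1/t)) ∧
    0 < 1 - Real.sqrt (1 - 1 * (1/t)) + Real.sqrt (1 - 2 * (1/t)) - Real.sqrt (1 - 3 * (1/t)) ∧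
    Real.sqrt (c * t) + Real.sqrt (c * (t - 1)) - Real.sqrt (c * (t - 2)) - Real.sqrt (c * (t - 3))
      = Real.sqrt c * Real.sqrt t *
        (1 + Real.sqrt (1 - 1 * (1/t)) - Real.sqrt (1 - 2 * (1/t)) - Real.sqrt (1 - 3 * (1/t))) ∧
    Real.sqrt (c * t) - Real.sqrt (c * (t - 1)) + Real.sqrt (c * (t - 2)) - Real.sqrt (c * (t - 3))
      = Real.sqrt c * Real.sqrt t *
        (1 - Real.sqrt (1 - 1 * (1/t)) + Real.sqrt (1 - 2 * (1/t)) - Real.sqrt (1 - 3 * (1/t))) := by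
  have htpos : 0 < t := by linarith
  have h1t : 1/t ≤ 1/3 := by
    rw [div_le_div_iff₀ htpos (by norm_num)]; linarith
  have h1tpos : 0 < 1/t := by positivity
  have hs1lt : Real.sqrt (1 - 1 * (1/t)) < 1 := by
    have := Real.sqrt_lt_sqrt (by linarith : (0:ℝ) ≤ 1 - 1 * (1/t)) (by linarith : 1 - 1*(1/t) < 1)
    rwa [Real.sqrt_one] at this
  have hs2lt : Real.sqrt (1 - 2 * (1/t)) < 1 := by
    have := Real.sqrt_lt_sqrt (by linarith : (0:ℝ) ≤ 1 - 2 * (1/t)) (by linarith : 1 - 2*(1/t) < 1)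
    rwa [Real.sqrt_one] at this
  have h31 : Real.sqrt (1 - 3 * (1/t)) < Real.sqrt (1 - 1 * (1/t)) :=
    Real.sqrt_lt_sqrt (by linarith) (by linarith)
  have h32 : Real.sqrt (1 - 3 * (1/t)) < Real.sqrt (1 - 2 * (1/t)) :=
    Real.sqrt_lt_sqrt (by linarith) (by linarith)
  have h0 : Real.sqrt (c * t) = Real.sqrt c * Real.sqrt t := Real.sqrt_mul hc.le t
  have e1 := sqrt_fact hc.le htpos 1
  have e2 := sqrt_fact hc.le htpos 2
  have e3 := sqrt_fact hc.le htpos 3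
  refine ⟨by linarith, by linarith, ?_, ?_⟩ <;> rw [h0, e1, e2, e3] <;> ring

private lemma h1n : Tendsto (fun n : ℕ => 1 / (n : ℝ)) atTop (nhdsWithin 0 {0}ᶜ) := by
  rw [tendsto_nhdsWithin_iff]
  refine ⟨tendsto_one_div_atTop_nhds_zero_nat, ?_⟩
  filter_upwards [eventually_ge_atTop 1] with n hn
  have : (0:ℝ) < n := by exact_mod_cast hn
  simp only [Set.mem_compl_iff, Set.mem_singleton_iff]
  positivity

private lemma sqrtTop : Tendsto Real.sqrt atTop atTop := by
  refine tendsto_atTop_atTop.mpr fun b => ⟨b^2, fun a ha => ?_⟩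
  calc b ≤ |b| := le_abs_self b
  _ = Real.sqrt (b^2) := (Real.sqrt_sq_eq_abs b).symm
  _ ≤ Real.sqrt a := Real.sqrt_le_sqrt ha

private lemma hinvsqrt : Tendsto (fun n : ℕ => (Real.sqrt n)⁻¹) atTop (nhds 0) :=
  (sqrtTop.comp tendsto_natCast_atTop_atTop).inv_tendsto_atTop

theorem stmt4 (c : ℝ) (hc : 0 < c) (α : ℝ) :
    Tendsto (fun n : ℕ =>
        -(n : ℝ) *
          Real.sin (Real.pi + Real.sqrt (c * n) + Real.sqrt (c * ((n : ℝ) - 1)) -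
            Real.sqrt (c * ((n : ℝ) - 2)) - Real.sqrt (c * ((n : ℝ) - 3))) *
          Real.sin (Real.sqrt (c * n) - Real.sqrt (c * ((n : ℝ) - 1)) +
            Real.sqrt (c * ((n : ℝ) - 2)) - Real.sqrt (c * ((n : ℝ) - 3))))
      atTop (nhds (2 * c)) := by
  set u : ℕ → ℝ := fun n => Real.sqrt (c * n) + Real.sqrt (c * ((n : ℝ) - 1)) -
      Real.sqrt (c * ((n : ℝ) - 2)) - Real.sqrt (c * ((n : ℝ) - 3)) with hu
  set v : ℕ → ℝ := fun n => Real.sqrt (c * n) - Real.sqrt (c * ((n : ℝ) - 1)) +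
      Real.sqrt (c * ((n : ℝ) - 2)) - Real.sqrt (c * ((n : ℝ) - 3)) with hv
  set X : ℕ → ℝ := fun n => 1 + Real.sqrt (1 - 1 * (1/(n:ℝ))) - Real.sqrt (1 - 2 * (1/(n:ℝ)))
      - Real.sqrt (1 - 3 * (1/(n:ℝ))) with hX
  set Y : ℕ → ℝ := fun n => 1 - Real.sqrt (1 - 1 * (1/(n:ℝ))) + Real.sqrt (1 - 2 * (1/(n:ℝ)))
      - Real.sqrt (1 - 3 * (1/(n:ℝ))) with hY
  have hkey : ∀ n : ℕ, 3 ≤ n → 0 < X n ∧ 0 < Y n ∧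
      u n = Real.sqrt c * Real.sqrt n * X n ∧ v n = Real.sqrt c * Real.sqrt n * Y n := by
    intro n hn
    have ht : (3:ℝ) ≤ (n:ℝ) := by exact_mod_cast hn
    have := key c n hc ht
    exact ⟨this.1, this.2.1, this.2.2.1, this.2.2.2⟩
  -- limits of the slope quotients
  have TA : Tendsto (fun n : ℕ => X n / (1/(n:ℝ))) atTop (nhds 2) := limA.comp h1n
  have TB : Tendsto (fun n : ℕ => Y n / (1/(n:ℝ))) atTop (nhds 1) := limB.comp h1n
  -- u and v tend to 0 and are eventually nonzero
  have huv_eq : ∀ n : ℕ, 3 ≤ n →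
      u n = Real.sqrt c * (X n / (1/(n:ℝ)) * (Real.sqrt n)⁻¹) ∧
      v n = Real.sqrt c * (Y n / (1/(n:ℝ)) * (Real.sqrt n)⁻¹) := by
    intro n hn
    obtain ⟨_, _, hue, hve⟩ := hkey n hn
    have htpos : (0:ℝ) < n := by
      have : (3:ℝ) ≤ (n:ℝ) := by exact_mod_cast hn
      linarith
    have hst : Real.sqrt n * Real.sqrt n = (n:ℝ) := Real.mul_self_sqrt htpos.le
    have hsne : Real.sqrt n ≠ 0 := by positivity
    constructor
    · rw [hue]; field_simp; linear_combination hst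
    · rw [hve]; field_simp; linear_combination hst
  have hu0 : Tendsto u atTop (nhdsWithin 0 {0}ᶜ) := by
    rw [tendsto_nhdsWithin_iff]
    constructor
    · have : Tendsto (fun n : ℕ => Real.sqrt c * (X n / (1/(n:ℝ)) * (Real.sqrt n)⁻¹)) atTop
          (nhds (Real.sqrt c * (2 * 0))) := tendsto_const_nhds.mul (TA.mul hinvsqrt)
      rw [show Real.sqrt c * (2 * 0) = 0 by ring] at this
      refine this.congr' ?_
      filter_upwards [eventually_ge_atTop 3] with n hn
      exact ((huv_eq n hn).1).symm
    · filter_upwards [eventually_ge_atTop 3] with n hn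
      obtain ⟨hXpos, _, hue, _⟩ := hkey n hn
      have htpos : (0:ℝ) < n := by
        have : (3:ℝ) ≤ (n:ℝ) := by exact_mod_cast hn
        linarith
      have : 0 < u n := by
        rw [hue]; positivity
      simp only [Set.mem_compl_iff, Set.mem_singleton_iff]
      exact this.ne'
  have hv0 : Tendsto v atTop (nhdsWithin 0 {0}ᶜ) := by
    rw [tendsto_nhdsWithin_iff]
    constructor
    · have : Tendsto (fun n : ℕ => Real.sqrt c * (Y n / (1/(n:ℝ)) * (Real.sqrt n)⁻¹)) atTop
          (nhds (Real.sqrt c * (1 * 0))) := tendsto_const_nhds.mul (TB.mul hinvsqrt)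
      rw [show Real.sqrt c * (1 * 0) = 0 by ring] at this
      refine this.congr' ?_
      filter_upwards [eventually_ge_atTop 3] with n hn
      exact ((huv_eq n hn).2).symm
    · filter_upwards [eventually_ge_atTop 3] with n hn
      obtain ⟨_, hYpos, _, hve⟩ := hkey n hn
      have htpos : (0:ℝ) < n := by
        have : (3:ℝ) ≤ (n:ℝ) := by exact_mod_cast hn
        linarith
      have : 0 < v n := by
        rw [hve]; positivity
      simp only [Set.mem_compl_iff, Set.mem_singleton_iff]
      exact this.ne'
  have T1 : Tendsto (fun n : ℕ => Real.sin (u n) / u n) atTop (nhds 1) := sin_div_lim.comp hu0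
  have T2 : Tendsto (fun n : ℕ => Real.sin (v n) / v n) atTop (nhds 1) := sin_div_lim.comp hv0
  have Tmain : Tendsto (fun n : ℕ => Real.sin (u n) / u n * (Real.sin (v n) / v n) *
      (c * (X n / (1/(n:ℝ))) * (Y n / (1/(n:ℝ))))) atTop
      (nhds (1 * 1 * (c * 2 * 1))) :=
    (T1.mul T2).mul ((tendsto_const_nhds.mul TA).mul TB)
  rw [show (1:ℝ) * 1 * (c * 2 * 1) = 2 * c by ring] at Tmain
  refine Tmain.congr' ?_
  filter_upwards [eventually_ge_atTop 3] with n hn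
  obtain ⟨hXpos, hYpos, hue, hve⟩ := hkey n hn
  have htpos : (0:ℝ) < n := by
    have : (3:ℝ) ≤ (n:ℝ) := by exact_mod_cast hn
    linarith
  have hst : Real.sqrt n * Real.sqrt n = (n:ℝ) := Real.mul_self_sqrt htpos.le
  have hcc : Real.sqrt c * Real.sqrt c = c := Real.mul_self_sqrt hc.le
  have upos : 0 < u n := by rw [hue]; positivity
  have vpos : 0 < v n := by rw [hve]; positivity
  have hune := upos.ne'
  have hvne := vpos.ne'
  have harg : Real.pi + Real.sqrt (c * n) + Real.sqrt (c * ((n : ℝ) - 1)) -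
      Real.sqrt (c * ((n : ℝ) - 2)) - Real.sqrt (c * ((n : ℝ) - 3)) = Real.pi + u n := by
    rw [hu]; ring
  have hsinpi : Real.sin (Real.pi + u n) = -Real.sin (u n) := by
    rw [Real.sin_add]; simp
  have hprod : (↑n:ℝ) * (u n * v n) = c * (X n * ↑n) * (Y n * ↑n) := by
    have h2 : (↑n:ℝ) * (Real.sqrt c * Real.sqrt ↑n * X n * (Real.sqrt c * Real.sqrt ↑n * Y n)) =
        (Real.sqrt c * Real.sqrt c) * ((Real.sqrt ↑n * Real.sqrt ↑n) * (↑n * (X n * Y n))) := by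
      ring
    rw [hue, hve, h2, hcc, hst]; ring
  show Real.sin (u n) / u n * (Real.sin (v n) / v n) * (c * (X n / (1/(n:ℝ))) * (Y n / (1/(n:ℝ))))
      = _
  rw [harg, hsinpi, one_div, div_inv_eq_mul, div_inv_eq_mul, ← hprod]
  show _ = -(↑n:ℝ) * -Real.sin (u n) * Real.sin (v n)
  field_simp
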